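/- There is a universal constant C > 0 such that for every locally integrable b : ℝ → ℝ with finite BMO seminorm and all bounded continuously differentiable f₁, f₂ : ℝ → ℂ with f₁′, f₂′ ∈ L²(ℝ), one has for every x ∈ ℝ: |∫_ℝ (b(y) − avg_x^y b) · (f₁(x)−f₁(y))(f₂(x)−f₂(y))/(x−y)² dy| ≤ C · ‖b‖_{BMO} ‖f₁′‖_{L²} ‖f₂′‖_{L²}. -/

import Mathlib

open MeasureTheory Set
open scoped ENNReal NNReal

/-- `avg_x^y b = (1/(x − y)) ∫_y^x b(s) ds`, the average of `b` between `y` and `x`. -/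
noncomputable def intervalAvg (b : ℝ → ℝ) (x y : ℝ) : ℝ :=
  (1 / (x - y)) * ∫ s in y..x, b s

/-- The mean oscillation of `b` over the bounded nondegenerate interval `I`. -/
noncomputable def meanOsc (b : ℝ → ℝ) (I : {q : ℝ × ℝ // q.1 < q.2}) : ℝ :=
  (1 / (I.1.2 - I.1.1)) *
    ∫ y in Set.Ioo I.1.1 I.1.2,
      |b y - (1 / (I.1.2 - I.1.1)) * ∫ s in Set.Ioo I.1.1 I.1.2, b s|

/-- The BMO seminorm: the supremum of mean oscillations over all bounded
nondegenerate intervals. -/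
noncomputable def bmoSeminorm (b : ℝ → ℝ) : ℝ :=
  ⨆ I : {q : ℝ × ℝ // q.1 < q.2}, meanOsc b I

/-- `b` has finite BMO seminorm. -/
def HasFiniteBMO (b : ℝ → ℝ) : Prop :=
  BddAbove (Set.range (meanOsc b))


noncomputable def mAvg (w : ℝ → ℝ) (a c : ℝ) : ℝ := (1/(c-a)) * ∫ s in Set.Ioo a c, w s

variable {w : ℝ → ℝ}

lemma meanOsc_nonneg (w : ℝ → ℝ) (I : {q : ℝ × ℝ // q.1 < q.2}) : 0 ≤ meanOsc w I := by
  have h : (0:ℝ) < I.1.2 - I.1.1 := sub_pos.2 I.2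
  exact mul_nonneg (by positivity) (integral_nonneg fun y => abs_nonneg _)

lemma bmo_nonneg (hB : HasFiniteBMO w) : 0 ≤ bmoSeminorm w :=
  le_trans (meanOsc_nonneg w ⟨(0,1), one_pos⟩) (le_ciSup hB _)

lemma intOn (hw : LocallyIntegrable w volume) (a c : ℝ) : IntegrableOn w (Set.Ioo a c) volume :=
  (hw.integrableOn_isCompact isCompact_Icc).mono_set Set.Ioo_subset_Icc_self

lemma osc_integral_le (hw : LocallyIntegrable w volume) (hB : HasFiniteBMO w) {a c : ℝ} (h : a < c) :
    ∫ y in Set.Ioo a c, |w y - mAvg w a c| ≤ (c-a) * bmoSeminorm w := by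
  have h1 : meanOsc w ⟨(a,c), h⟩ ≤ bmoSeminorm w := le_ciSup hB _
  have h2 : meanOsc w ⟨(a,c), h⟩ = (1/(c-a)) * ∫ y in Set.Ioo a c, |w y - mAvg w a c| := rfl
  have hca : (0:ℝ) < c - a := sub_pos.2 h
  rw [h2] at h1
  calc ∫ y in Set.Ioo a c, |w y - mAvg w a c|
      = (c-a) * ((1/(c-a)) * ∫ y in Set.Ioo a c, |w y - mAvg w a c|) := by
        field_simp
    _ ≤ (c-a) * bmoSeminorm w := by
        exact mul_le_mul_of_nonneg_left h1 hca.le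

lemma intervalAvg_eq_right {x y : ℝ} (h : x < y) : intervalAvg w x y = mAvg w x y := by
  unfold intervalAvg mAvg
  rw [intervalIntegral.integral_symm, intervalIntegral.integral_of_le h.le,
    integral_Ioc_eq_integral_Ioo]
  have h1 : x - y ≠ 0 := by linarith
  have h2 : y - x ≠ 0 := by linarith
  field_simp
  ring

lemma intervalAvg_eq_left {x y : ℝ} (h : y < x) : intervalAvg w x y = mAvg w y x := by
  unfold intervalAvg mAvg
  rw [intervalIntegral.integral_of_le h.le, integral_Ioc_eq_integral_Ioo]

lemma mAvg_sub (hw : LocallyIntegrable w volume) (hB : HasFiniteBMO w) {a c u v : ℝ}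
    (hau : a ≤ u) (huv : u < v) (hvc : v ≤ c) :
    |mAvg w u v - mAvg w a c| ≤ ((c-a)/(v-u)) * bmoSeminorm w := by
  have hac : a < c := lt_of_le_of_lt hau (lt_of_lt_of_le huv hvc)
  have hvu : (0:ℝ) < v - u := sub_pos.2 huv
  set m := mAvg w a c with hm
  have hconst : IntegrableOn (fun _ : ℝ => m) (Set.Ioo u v) volume := by
    refine integrableOn_const ?_
    exact measure_Ioo_lt_top.ne
  have h1 : mAvg w u v - m = (1/(v-u)) * ∫ y in Set.Ioo u v, (w y - m) := by
    rw [integral_sub (intOn hw u v) hconst]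
    rw [setIntegral_const]
    simp only [Real.volume_Ioo, smul_eq_mul]
    rw [Real.volume_real_Ioo_of_le huv.le]
    unfold mAvg
    field_simp
  have h2 : |mAvg w u v - m| ≤ (1/(v-u)) * ∫ y in Set.Ioo u v, |w y - m| := by
    rw [h1, abs_mul]
    have : |1/(v-u)| = 1/(v-u) := abs_of_pos (by positivity)
    rw [this]
    apply mul_le_mul_of_nonneg_left _ (by positivity)
    rw [← Real.norm_eq_abs]
    calc ‖∫ y in Set.Ioo u v, (w y - m)‖ ≤ ∫ y in Set.Ioo u v, ‖w y - m‖ :=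
          norm_integral_le_integral_norm _
      _ = ∫ y in Set.Ioo u v, |w y - m| := by simp [Real.norm_eq_abs]
  have h3 : ∫ y in Set.Ioo u v, |w y - m| ≤ ∫ y in Set.Ioo a c, |w y - m| := by
    apply setIntegral_mono_set
    · exact ((intOn hw a c).sub (integrableOn_const measure_Ioo_lt_top.ne)).abs
    · exact Filter.Eventually.of_forall fun y => abs_nonneg _
    · exact HasSubset.Subset.eventuallyLE (Set.Ioo_subset_Ioo hau hvc)
  calc |mAvg w u v - m| ≤ (1/(v-u)) * ∫ y in Set.Ioo u v, |w y - m| := h2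
    _ ≤ (1/(v-u)) * ∫ y in Set.Ioo a c, |w y - m| :=
        mul_le_mul_of_nonneg_left h3 (by positivity)
    _ ≤ (1/(v-u)) * ((c-a) * bmoSeminorm w) :=
        mul_le_mul_of_nonneg_left (osc_integral_le hw hB hac) (by positivity)
    _ = ((c-a)/(v-u)) * bmoSeminorm w := by ring

lemma lint_abs {g : ℝ → ℝ} {s : Set ℝ} (hg : IntegrableOn g s volume) :
    ∫⁻ y in s, (‖g y‖₊ : ℝ≥0∞) = ENNReal.ofReal (∫ y in s, |g y|) := by
  simp only [← enorm_eq_nnnorm]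
  rw [← ofReal_integral_norm_eq_lintegral_enorm hg]
  simp [Real.norm_eq_abs]

lemma osc_lintegral_le (hw : LocallyIntegrable w volume) (hB : HasFiniteBMO w) {a c : ℝ} (h : a < c) :
    ∫⁻ y in Set.Ioo a c, (‖w y - mAvg w a c‖₊ : ℝ≥0∞)
      ≤ ENNReal.ofReal ((c-a) * bmoSeminorm w) := by
  have hsub : IntegrableOn (fun y => w y - mAvg w a c) (Set.Ioo a c) volume :=
    (intOn hw a c).sub (integrableOn_const measure_Ioo_lt_top.ne)
  rw [lint_abs (g := fun y => w y - mAvg w a c) hsub]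
  exact ENNReal.ofReal_le_ofReal (osc_integral_le hw hB h)

lemma annulus_plus (hw : LocallyIntegrable w volume) (hB : HasFiniteBMO w) (x : ℝ) (k : ℤ) :
    ∫⁻ y in Set.Ioc (x+(2:ℝ)^k) (x+(2:ℝ)^(k+1)), (‖w y - intervalAvg w x y‖₊ : ℝ≥0∞)
      ≤ ENNReal.ofReal ((2:ℝ)^(k+2) * bmoSeminorm w) := by
  have h2k : (0:ℝ) < 2^k := by positivity
  have e1 : (2:ℝ)^(k+1) = 2 * 2^k := by
    rw [zpow_add₀ (two_ne_zero) k 1]; ring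
  have e2 : (2:ℝ)^(k+2) = 4 * 2^k := by
    rw [zpow_add₀ (two_ne_zero) k 2]; norm_num; ring
  set c := x + (2:ℝ)^(k+1) with hc
  have hxc : x < c := by
    have : (0:ℝ) < 2^(k+1) := by positivity
    simp only [hc]; linarith
  set m := mAvg w x c with hm
  have key : ∀ y ∈ Set.Ioc (x+(2:ℝ)^k) c,
      (‖w y - intervalAvg w x y‖₊ : ℝ≥0∞)
        ≤ (‖w y - m‖₊ : ℝ≥0∞) + ENNReal.ofReal (2*bmoSeminorm w) := by
    intro y hy
    have hxy : x < y := lt_trans (by linarith) hy.1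
    rw [intervalAvg_eq_right hxy]
    have havg : |mAvg w x y - m| ≤ 2 * bmoSeminorm w := by
      refine le_trans (mAvg_sub hw hB (le_refl x) hxy hy.2) ?_
      have hyx : (2:ℝ)^k < y - x := by linarith [hy.1]
      have h1 : (c - x)/(y - x) ≤ 2 := by
        rw [div_le_iff₀ (by linarith)]
        simp only [hc]; linarith
      exact mul_le_mul_of_nonneg_right h1 (bmo_nonneg hB)
    have htri : |w y - mAvg w x y| ≤ |w y - m| + 2 * bmoSeminorm w := by
      have t1 : |w y - mAvg w x y| ≤ |w y - m| + |m - mAvg w x y| := abs_sub_le _ _ _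
      rw [abs_sub_comm m] at t1
      linarith
    rw [← enorm_eq_nnnorm, ← enorm_eq_nnnorm, Real.enorm_eq_ofReal_abs, Real.enorm_eq_ofReal_abs]
    refine le_trans (ENNReal.ofReal_le_ofReal htri) (le_of_eq ?_)
    exact ENNReal.ofReal_add (abs_nonneg _) (by linarith [bmo_nonneg hB])
  calc ∫⁻ y in Set.Ioc (x+(2:ℝ)^k) c, (‖w y - intervalAvg w x y‖₊ : ℝ≥0∞)
      ≤ ∫⁻ y in Set.Ioc (x+(2:ℝ)^k) c,
          ((‖w y - m‖₊ : ℝ≥0∞) + ENNReal.ofReal (2*bmoSeminorm w)) := by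
        refine lintegral_mono_ae ?_
        rw [ae_restrict_iff' measurableSet_Ioc]
        exact Filter.Eventually.of_forall key
    _ = (∫⁻ y in Set.Ioc (x+(2:ℝ)^k) c, (‖w y - m‖₊ : ℝ≥0∞))
          + ENNReal.ofReal (2*bmoSeminorm w) * volume (Set.Ioc (x+(2:ℝ)^k) c) := by
        rw [lintegral_add_right _ measurable_const, setLIntegral_const]
    _ ≤ (∫⁻ y in Set.Ioo x c, (‖w y - m‖₊ : ℝ≥0∞))
          + ENNReal.ofReal (2*bmoSeminorm w) * volume (Set.Ioc (x+(2:ℝ)^k) c) := by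
        gcongr ?_ + _
        calc ∫⁻ y in Set.Ioc (x+(2:ℝ)^k) c, (‖w y - m‖₊ : ℝ≥0∞)
            ≤ ∫⁻ y in Set.Ioc x c, (‖w y - m‖₊ : ℝ≥0∞) :=
              lintegral_mono_set (Set.Ioc_subset_Ioc_left (by linarith))
          _ = ∫⁻ y in Set.Ioo x c, (‖w y - m‖₊ : ℝ≥0∞) := by
              rw [Measure.restrict_congr_set Ioo_ae_eq_Ioc.symm]
    _ ≤ ENNReal.ofReal ((c-x) * bmoSeminorm w)
          + ENNReal.ofReal (2*bmoSeminorm w) * ENNReal.ofReal ((2:ℝ)^k) := by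
        gcongr
        · exact osc_lintegral_le hw hB hxc
        · rw [Real.volume_Ioc]
          apply ENNReal.ofReal_le_ofReal
          simp only [hc]; linarith
    _ = ENNReal.ofReal ((2:ℝ)^(k+2) * bmoSeminorm w) := by
        rw [← ENNReal.ofReal_mul (by linarith [bmo_nonneg hB]), ← ENNReal.ofReal_add
          (by nlinarith [bmo_nonneg hB, hxc]) (by nlinarith [bmo_nonneg hB, h2k])]
        congr 1
        have : c - x = (2:ℝ)^(k+1) := by simp [hc]
        rw [this, e1, e2]; ring

lemma annulus_minus (hw : LocallyIntegrable w volume) (hB : HasFiniteBMO w) (x : ℝ) (k : ℤ) :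
    ∫⁻ y in Set.Ico (x-(2:ℝ)^(k+1)) (x-(2:ℝ)^k), (‖w y - intervalAvg w x y‖₊ : ℝ≥0∞)
      ≤ ENNReal.ofReal ((2:ℝ)^(k+2) * bmoSeminorm w) := by
  have h2k : (0:ℝ) < 2^k := by positivity
  have e1 : (2:ℝ)^(k+1) = 2 * 2^k := by
    rw [zpow_add₀ (two_ne_zero) k 1]; ring
  have e2 : (2:ℝ)^(k+2) = 4 * 2^k := by
    rw [zpow_add₀ (two_ne_zero) k 2]; norm_num; ring
  set a := x - (2:ℝ)^(k+1) with ha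
  have hax : a < x := by
    have : (0:ℝ) < 2^(k+1) := by positivity
    simp only [ha]; linarith
  set m := mAvg w a x with hm
  have key : ∀ y ∈ Set.Ico a (x-(2:ℝ)^k),
      (‖w y - intervalAvg w x y‖₊ : ℝ≥0∞)
        ≤ (‖w y - m‖₊ : ℝ≥0∞) + ENNReal.ofReal (2*bmoSeminorm w) := by
    intro y hy
    have hyx : y < x := lt_trans hy.2 (by linarith)
    rw [intervalAvg_eq_left hyx]
    have havg : |mAvg w y x - m| ≤ 2 * bmoSeminorm w := by
      refine le_trans (mAvg_sub hw hB hy.1 hyx (le_refl x)) ?_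
      have hxy2 : (2:ℝ)^k < x - y := by linarith [hy.2]
      have h1 : (x - a)/(x - y) ≤ 2 := by
        rw [div_le_iff₀ (by linarith)]
        simp only [ha]; linarith
      exact mul_le_mul_of_nonneg_right h1 (bmo_nonneg hB)
    have htri : |w y - mAvg w y x| ≤ |w y - m| + 2 * bmoSeminorm w := by
      have t1 : |w y - mAvg w y x| ≤ |w y - m| + |m - mAvg w y x| := abs_sub_le _ _ _
      rw [abs_sub_comm m] at t1
      linarith
    rw [← enorm_eq_nnnorm, ← enorm_eq_nnnorm, Real.enorm_eq_ofReal_abs, Real.enorm_eq_ofReal_abs]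
    refine le_trans (ENNReal.ofReal_le_ofReal htri) (le_of_eq ?_)
    exact ENNReal.ofReal_add (abs_nonneg _) (by linarith [bmo_nonneg hB])
  calc ∫⁻ y in Set.Ico a (x-(2:ℝ)^k), (‖w y - intervalAvg w x y‖₊ : ℝ≥0∞)
      ≤ ∫⁻ y in Set.Ico a (x-(2:ℝ)^k),
          ((‖w y - m‖₊ : ℝ≥0∞) + ENNReal.ofReal (2*bmoSeminorm w)) := by
        refine lintegral_mono_ae ?_
        rw [ae_restrict_iff' measurableSet_Ico]
        exact Filter.Eventually.of_forall key
    _ = (∫⁻ y in Set.Ico a (x-(2:ℝ)^k), (‖w y - m‖₊ : ℝ≥0∞))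
          + ENNReal.ofReal (2*bmoSeminorm w) * volume (Set.Ico a (x-(2:ℝ)^k)) := by
        rw [lintegral_add_right _ measurable_const, setLIntegral_const]
    _ ≤ (∫⁻ y in Set.Ioo a x, (‖w y - m‖₊ : ℝ≥0∞))
          + ENNReal.ofReal (2*bmoSeminorm w) * volume (Set.Ico a (x-(2:ℝ)^k)) := by
        gcongr ?_ + _
        calc ∫⁻ y in Set.Ico a (x-(2:ℝ)^k), (‖w y - m‖₊ : ℝ≥0∞)
            ≤ ∫⁻ y in Set.Ico a x, (‖w y - m‖₊ : ℝ≥0∞) :=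
              lintegral_mono_set (Set.Ico_subset_Ico_right (by linarith))
          _ = ∫⁻ y in Set.Ioo a x, (‖w y - m‖₊ : ℝ≥0∞) := by
              rw [Measure.restrict_congr_set Ioo_ae_eq_Ico.symm]
    _ ≤ ENNReal.ofReal ((x-a) * bmoSeminorm w)
          + ENNReal.ofReal (2*bmoSeminorm w) * ENNReal.ofReal ((2:ℝ)^k) := by
        gcongr
        · exact osc_lintegral_le hw hB hax
        · rw [Real.volume_Ico]
          apply ENNReal.ofReal_le_ofReal
          simp only [ha]; linarith
    _ = ENNReal.ofReal ((2:ℝ)^(k+2) * bmoSeminorm w) := by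
        rw [← ENNReal.ofReal_mul (by linarith [bmo_nonneg hB]), ← ENNReal.ofReal_add
          (by nlinarith [bmo_nonneg hB, hax]) (by nlinarith [bmo_nonneg hB, h2k])]
        congr 1
        have : x - a = (2:ℝ)^(k+1) := by simp [ha]
        rw [this, e1, e2]; ring

noncomputable def D (k : ℤ) : ℝ≥0∞ := ENNReal.ofReal ((2:ℝ)^k)

lemma D_ne_zero (k : ℤ) : D k ≠ 0 := by
  simp only [D, ne_eq, ENNReal.ofReal_eq_zero, not_le]
  positivity
lemma D_ne_top (k : ℤ) : D k ≠ ∞ := ENNReal.ofReal_ne_top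
lemma D_add (k j : ℤ) : D (k + j) = D k * D j := by
  unfold D
  rw [← ENNReal.ofReal_mul (by positivity), ← zpow_add₀ (two_ne_zero)]
lemma D_nat (n : ℕ) : D (n : ℤ) = 2^n := by
  unfold D
  rw [zpow_natCast, ENNReal.ofReal_pow (by norm_num)]
  norm_num

lemma mul_le_sq (p q : ℝ≥0∞) : p * q ≤ p^2 + q^2 := by
  rcases le_total p q with h|h
  · calc p * q ≤ q * q := mul_le_mul' h le_rfl
      _ = q^2 := (sq q).symm
      _ ≤ p^2 + q^2 := le_add_self
  · calc p * q ≤ p * p := mul_le_mul' le_rfl h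
      _ = p^2 := (sq p).symm
      _ ≤ p^2 + q^2 := le_self_add

lemma tsum_cs {ι : Type*} (a b : ι → ℝ≥0∞) :
    (∑' i, a i * b i)^2 ≤ 2 * ((∑' i, a i^2) * (∑' i, b i^2)) := by
  have expand : (∑' i, a i * b i)^2 = ∑' i, ∑' j, (a i * b i) * (a j * b j) := by
    rw [sq, ← ENNReal.tsum_mul_right]
    exact tsum_congr fun i => (ENNReal.tsum_mul_left).symm
  rw [expand]
  have step : ∀ i j, (a i * b i) * (a j * b j) ≤ (a i * b j)^2 + (a j * b i)^2 := by
    intro i j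
    have : (a i * b i) * (a j * b j) = (a i * b j) * (a j * b i) := by ring
    rw [this]
    exact mul_le_sq _ _
  calc ∑' i, ∑' j, (a i * b i) * (a j * b j)
      ≤ ∑' i, ∑' j, ((a i * b j)^2 + (a j * b i)^2) :=
        ENNReal.tsum_le_tsum fun i => ENNReal.tsum_le_tsum fun j => step i j
    _ = (∑' i, ∑' j, (a i * b j)^2) + (∑' i, ∑' j, (a j * b i)^2) := by
        rw [← ENNReal.tsum_add]
        exact tsum_congr fun i => ENNReal.tsum_add
    _ = ((∑' i, a i^2) * (∑' j, b j^2)) + ((∑' i, a i^2) * (∑' j, b j^2)) := by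
        congr 1
        · rw [← ENNReal.tsum_mul_right]
          exact tsum_congr fun i => by
            rw [← ENNReal.tsum_mul_left]
            exact tsum_congr fun j => by rw [mul_pow]
        · calc ∑' i, ∑' j, (a j * b i)^2
              = ∑' i, ((∑' j, a j^2) * b i^2) := tsum_congr fun i => by
                rw [← ENNReal.tsum_mul_right]
                exact tsum_congr fun j => by rw [mul_pow]
            _ = (∑' j, a j^2) * ∑' i, b i^2 := ENNReal.tsum_mul_left
    _ = 2 * ((∑' i, a i^2) * (∑' i, b i^2)) := by ring

lemma tsum_ray_ge (φ : ℤ → ℝ≥0∞) (j : ℤ) :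
    ∑' k:ℤ, (if j ≤ k then φ k else 0) = ∑' n:ℕ, φ (j + n) := by
  symm
  have hinj : Function.Injective (fun n:ℕ => j + (n:ℤ)) := by
    intro m n h; simpa using h
  have hsupp : Function.support (fun k:ℤ => if j ≤ k then φ k else 0)
      ⊆ Set.range (fun n:ℕ => j + (n:ℤ)) := by
    intro k hk
    by_cases h : j ≤ k
    · refine ⟨(k - j).toNat, ?_⟩
      show j + ((k - j).toNat : ℤ) = k
      rw [Int.toNat_of_nonneg (by omega)]; ring
    · simp [h] at hk
  have := Function.Injective.tsum_eq hinj hsupp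
  rw [← this]
  exact tsum_congr fun n => by
    rw [if_pos (by omega : j ≤ j + (n:ℤ))]

lemma tsum_ray_le (φ : ℤ → ℝ≥0∞) (k : ℤ) :
    ∑' j:ℤ, (if j ≤ k then φ j else 0) = ∑' n:ℕ, φ (k - n) := by
  symm
  have hinj : Function.Injective (fun n:ℕ => k - (n:ℤ)) := by
    intro m n h; simpa using h
  have hsupp : Function.support (fun j:ℤ => if j ≤ k then φ j else 0)
      ⊆ Set.range (fun n:ℕ => k - (n:ℤ)) := by
    intro j hj
    by_cases h : j ≤ k
    · refine ⟨(k - j).toNat, ?_⟩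
      show k - ((k - j).toNat : ℤ) = j
      rw [Int.toNat_of_nonneg (by omega)]; ring
    · simp [h] at hj
  have := Function.Injective.tsum_eq hinj hsupp
  rw [← this]
  exact tsum_congr fun n => by
    rw [if_pos (by omega : k - (n:ℤ) ≤ k)]

lemma geo4 {r : ℝ≥0∞} (h : r ≤ ENNReal.ofReal (3/4)) : ∑' n:ℕ, r^n ≤ 4 := by
  rw [ENNReal.tsum_geometric]
  have h2 : ENNReal.ofReal (1/4) ≤ 1 - r := by
    calc ENNReal.ofReal (1/4) = ENNReal.ofReal 1 - ENNReal.ofReal (3/4) := by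
          rw [← ENNReal.ofReal_sub _ (by norm_num)]; norm_num
      _ = 1 - ENNReal.ofReal (3/4) := by rw [ENNReal.ofReal_one]
      _ ≤ 1 - r := tsub_le_tsub_left h 1
  calc (1 - r)⁻¹ ≤ (ENNReal.ofReal (1/4))⁻¹ := ENNReal.inv_le_inv' h2
    _ = ENNReal.ofReal 4 := by
        rw [← ENNReal.ofReal_inv_of_pos (by norm_num : (0:ℝ) < 1/4)]; norm_num
    _ ≤ 4 := by simp

lemma dyadic_sum (l h : ℤ → ℝ≥0∞) (hl : ∀ j, (l j)^2 ≤ D j * h j) :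
    ∑' k:ℤ, (D k)⁻¹ * (∑' j:ℤ, if j ≤ k then l j else 0)^2 ≤ 32 * ∑' j:ℤ, h j := by
  set s : ℝ≥0∞ := ENNReal.ofReal (5/6) with hs
  set t : ℝ≥0∞ := ENNReal.ofReal (6/5) with ht
  have hst : s * t = 1 := by
    rw [hs, ht, ← ENNReal.ofReal_mul (by norm_num)]
    norm_num
  have hs2 : s^2 ≤ ENNReal.ofReal (3/4) := by
    rw [hs, ← ENNReal.ofReal_pow (by norm_num)]
    exact ENNReal.ofReal_le_ofReal (by norm_num)
  have key : ∀ k:ℤ, (∑' j:ℤ, if j ≤ k then l j else 0)^2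
      ≤ 8 * ∑' j:ℤ, (if j ≤ k then (t^2)^((k-j).toNat) * (l j)^2 else 0) := by
    intro k
    have hab : ∀ j:ℤ, (if j ≤ k then s^((k-j).toNat) else 0) *
        (if j ≤ k then t^((k-j).toNat) * l j else 0) = (if j ≤ k then l j else 0) := by
      intro j
      by_cases hj : j ≤ k
      · rw [if_pos hj, if_pos hj, if_pos hj, ← mul_assoc, ← mul_pow, hst, one_pow, one_mul]
      · simp [hj]
    have hcs := tsum_cs (fun j:ℤ => if j ≤ k then s^((k-j).toNat) else 0)
      (fun j:ℤ => if j ≤ k then t^((k-j).toNat) * l j else 0)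
    rw [tsum_congr hab] at hcs
    refine le_trans hcs ?_
    have e1 : ∑' j:ℤ, (if j ≤ k then s^((k-j).toNat) else 0)^2
        = ∑' j:ℤ, (if j ≤ k then (s^2)^((k-j).toNat) else 0) := by
      refine tsum_congr fun j => ?_
      by_cases hj : j ≤ k
      · rw [if_pos hj, if_pos hj, ← pow_mul, ← pow_mul, mul_comm 2]
      · simp [hj]
    have e2 : ∑' j:ℤ, (if j ≤ k then (s^2)^((k-j).toNat) else 0) ≤ 4 := by
      rw [tsum_ray_le (fun j => (s^2)^((k-j).toNat)) k]
      refine le_trans (le_of_eq (tsum_congr fun n => ?_)) (geo4 hs2)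
      congr 1
      omega
    have e3 : ∑' j:ℤ, (if j ≤ k then t^((k-j).toNat) * l j else 0)^2
        = ∑' j:ℤ, (if j ≤ k then (t^2)^((k-j).toNat) * (l j)^2 else 0) := by
      refine tsum_congr fun j => ?_
      by_cases hj : j ≤ k
      · rw [if_pos hj, if_pos hj, mul_pow, ← pow_mul, ← pow_mul, mul_comm 2]
      · simp [hj]
    rw [e1, e3]
    calc 2 * ((∑' j:ℤ, (if j ≤ k then (s^2)^((k-j).toNat) else 0)) *
            (∑' j:ℤ, (if j ≤ k then (t^2)^((k-j).toNat) * (l j)^2 else 0)))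
        ≤ 2 * (4 * (∑' j:ℤ, (if j ≤ k then (t^2)^((k-j).toNat) * (l j)^2 else 0))) := by
          gcongr
      _ = 8 * ∑' j:ℤ, (if j ≤ k then (t^2)^((k-j).toNat) * (l j)^2 else 0) := by ring
  calc ∑' k:ℤ, (D k)⁻¹ * (∑' j:ℤ, if j ≤ k then l j else 0)^2
      ≤ ∑' k:ℤ, (D k)⁻¹ * (8 * ∑' j:ℤ, (if j ≤ k then (t^2)^((k-j).toNat) * (l j)^2 else 0)) := by
        exact ENNReal.tsum_le_tsum fun k => mul_le_mul' le_rfl (key k)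
    _ = 8 * ∑' k:ℤ, ∑' j:ℤ, (if j ≤ k then (D k)⁻¹ * (t^2)^((k-j).toNat) * (l j)^2 else 0) := by
        rw [← ENNReal.tsum_mul_left]
        refine tsum_congr fun k => ?_
        rw [← mul_assoc, mul_comm (D k)⁻¹ 8, mul_assoc, ← ENNReal.tsum_mul_left]
        congr 1
        refine tsum_congr fun j => ?_
        by_cases hj : j ≤ k
        · rw [if_pos hj, if_pos hj]; ring
        · simp [hj]
    _ = 8 * ∑' j:ℤ, ∑' k:ℤ, (if j ≤ k then (D k)⁻¹ * (t^2)^((k-j).toNat) * (l j)^2 else 0) := by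
        rw [ENNReal.tsum_comm]
    _ ≤ 8 * ∑' j:ℤ, 4 * ((D j)⁻¹ * (l j)^2) := by
        gcongr with j
        have : ∑' k:ℤ, (if j ≤ k then (D k)⁻¹ * (t^2)^((k-j).toNat) * (l j)^2 else 0)
            = (∑' k:ℤ, (if j ≤ k then (D k)⁻¹ * (t^2)^((k-j).toNat) else 0)) * (l j)^2 := by
          rw [← ENNReal.tsum_mul_right]
          refine tsum_congr fun k => ?_
          by_cases hj : j ≤ k
          · rw [if_pos hj, if_pos hj]
          · simp [hj]
        rw [this]
        have hray : ∑' k:ℤ, (if j ≤ k then (D k)⁻¹ * (t^2)^((k-j).toNat) else 0)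
            = ∑' n:ℕ, (D (j+n))⁻¹ * (t^2)^(((j+(n:ℤ))-j).toNat) :=
          tsum_ray_ge (fun k => (D k)⁻¹ * (t^2)^((k-j).toNat)) j
        have hterm : ∀ n:ℕ, (D (j+n))⁻¹ * (t^2)^(((j+(n:ℤ))-j).toNat)
            = (D j)⁻¹ * (2⁻¹ * t^2)^n := by
          intro n
          have h1 : ((j+(n:ℤ))-j).toNat = n := by omega
          rw [h1, D_add, ENNReal.mul_inv (Or.inl (D_ne_zero j)) (Or.inl (D_ne_top j)),
            D_nat, ENNReal.inv_pow, mul_assoc, ← mul_pow]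
        rw [hray, tsum_congr hterm, ENNReal.tsum_mul_left]
        have hr2 : 2⁻¹ * t^2 ≤ ENNReal.ofReal (3/4) := by
          rw [ht, ← ENNReal.ofReal_pow (by norm_num),
            show (2:ℝ≥0∞) = ENNReal.ofReal 2 by norm_num,
            ← ENNReal.ofReal_inv_of_pos (by norm_num),
            ← ENNReal.ofReal_mul (by norm_num)]
          exact ENNReal.ofReal_le_ofReal (by norm_num)
        calc ((D j)⁻¹ * ∑' n:ℕ, (2⁻¹ * t^2)^n) * (l j)^2
            ≤ ((D j)⁻¹ * 4) * (l j)^2 := mul_le_mul' (mul_le_mul' le_rfl (geo4 hr2)) le_rfl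
          _ = 4 * ((D j)⁻¹ * (l j)^2) := by ring
    _ ≤ 8 * ∑' j:ℤ, 4 * h j := by
        gcongr with j
        calc (D j)⁻¹ * (l j)^2 ≤ (D j)⁻¹ * (D j * h j) := mul_le_mul' le_rfl (hl j)
          _ = ((D j)⁻¹ * D j) * h j := by ring
          _ = h j := by rw [ENNReal.inv_mul_cancel (D_ne_zero j) (D_ne_top j), one_mul]
    _ = 32 * ∑' j:ℤ, h j := by rw [ENNReal.tsum_mul_left, ← mul_assoc]; norm_num

lemma ann_mem {t : ℝ} (ht : 0 < t) : ∃ k:ℤ, (2:ℝ)^k < t ∧ t ≤ 2^(k+1) := by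
  obtain ⟨k, hk⟩ := exists_mem_Ioc_zpow ht one_lt_two
  exact ⟨k, hk.1, hk.2⟩

lemma iUnion_plus (x : ℝ) :
    (⋃ k:ℤ, Set.Ioc (x+(2:ℝ)^k) (x+(2:ℝ)^(k+1))) = Set.Ioi x := by
  ext y
  simp only [Set.mem_iUnion, Set.mem_Ioc, Set.mem_Ioi]
  constructor
  · rintro ⟨k, h1, _⟩
    have : (0:ℝ) < 2^k := by positivity
    linarith
  · intro hy
    obtain ⟨k, h1, h2⟩ := ann_mem (show (0:ℝ) < y - x by linarith)
    exact ⟨k, by linarith, by linarith⟩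

lemma iUnion_plus_le (x : ℝ) (k : ℤ) :
    (⋃ j:{j:ℤ // j ≤ k}, Set.Ioc (x+(2:ℝ)^(j:ℤ)) (x+(2:ℝ)^((j:ℤ)+1)))
      = Set.Ioc x (x+(2:ℝ)^(k+1)) := by
  ext y
  simp only [Set.mem_iUnion, Set.mem_Ioc]
  constructor
  · rintro ⟨⟨j, hj⟩, h1, h2⟩
    have hp : (0:ℝ) < 2^(j:ℤ) := by positivity
    have hm : (2:ℝ)^((j:ℤ)+1) ≤ 2^(k+1) := zpow_le_zpow_right₀ one_le_two (by omega)
    exact ⟨by linarith, by linarith⟩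
  · rintro ⟨h1, h2⟩
    obtain ⟨j, hj1, hj2⟩ := ann_mem (show (0:ℝ) < y - x by linarith)
    have hjk : j ≤ k := by
      by_contra hc
      push_neg at hc
      have : (2:ℝ)^(k+1) ≤ 2^j := zpow_le_zpow_right₀ one_le_two (by omega)
      linarith
    exact ⟨⟨j, hjk⟩, by linarith, by linarith⟩

lemma iUnion_minus (x : ℝ) :
    (⋃ k:ℤ, Set.Ico (x-(2:ℝ)^(k+1)) (x-(2:ℝ)^k)) = Set.Iio x := by
  ext y
  simp only [Set.mem_iUnion, Set.mem_Ico, Set.mem_Iio]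
  constructor
  · rintro ⟨k, _, h2⟩
    have : (0:ℝ) < 2^k := by positivity
    linarith
  · intro hy
    obtain ⟨k, h1, h2⟩ := ann_mem (show (0:ℝ) < x - y by linarith)
    exact ⟨k, by linarith, by linarith⟩

lemma iUnion_minus_le (x : ℝ) (k : ℤ) :
    (⋃ j:{j:ℤ // j ≤ k}, Set.Ico (x-(2:ℝ)^((j:ℤ)+1)) (x-(2:ℝ)^(j:ℤ)))
      = Set.Ico (x-(2:ℝ)^(k+1)) x := by
  ext y
  simp only [Set.mem_iUnion, Set.mem_Ico]
  constructor
  · rintro ⟨⟨j, hj⟩, h1, h2⟩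
    have hp : (0:ℝ) < 2^(j:ℤ) := by positivity
    have hm : (2:ℝ)^((j:ℤ)+1) ≤ 2^(k+1) := zpow_le_zpow_right₀ one_le_two (by omega)
    exact ⟨by linarith, by linarith⟩
  · rintro ⟨h1, h2⟩
    obtain ⟨j, hj1, hj2⟩ := ann_mem (show (0:ℝ) < x - y by linarith)
    have hjk : j ≤ k := by
      by_contra hc
      push_neg at hc
      have : (2:ℝ)^(k+1) ≤ 2^j := zpow_le_zpow_right₀ one_le_two (by omega)
      linarith
    exact ⟨⟨j, hjk⟩, by linarith, by linarith⟩

lemma disj_plus (x : ℝ) :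
    Pairwise (Function.onFun Disjoint fun k:ℤ => Set.Ioc (x+(2:ℝ)^k) (x+(2:ℝ)^(k+1))) := by
  intro i j hij
  rcases lt_or_gt_of_ne hij with h|h
  · have : (2:ℝ)^(i+1) ≤ 2^j := zpow_le_zpow_right₀ one_le_two (by omega)
    exact Set.Ioc_disjoint_Ioc.2
      (le_trans (min_le_left _ _) (le_trans (by linarith) (le_max_right _ _)))
  · have : (2:ℝ)^(j+1) ≤ 2^i := zpow_le_zpow_right₀ one_le_two (by omega)
    exact Set.Ioc_disjoint_Ioc.2
      (le_trans (min_le_right _ _) (le_trans (by linarith) (le_max_left _ _)))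

lemma disj_minus (x : ℝ) :
    Pairwise (Function.onFun Disjoint fun k:ℤ => Set.Ico (x-(2:ℝ)^(k+1)) (x-(2:ℝ)^k)) := by
  intro i j hij
  rcases lt_or_gt_of_ne hij with h|h
  · have : (2:ℝ)^(i+1) ≤ 2^j := zpow_le_zpow_right₀ one_le_two (by omega)
    exact Set.Ico_disjoint_Ico.2
      (le_trans (min_le_right _ _) (le_trans (by linarith) (le_max_left _ _)))
  · have : (2:ℝ)^(j+1) ≤ 2^i := zpow_le_zpow_right₀ one_le_two (by omega)
    exact Set.Ico_disjoint_Ico.2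
      (le_trans (min_le_left _ _) (le_trans (by linarith) (le_max_right _ _)))

lemma lint_partition_plus (x : ℝ) (g : ℝ → ℝ≥0∞) :
    ∫⁻ y in Set.Ioi x, g y
      = ∑' k:ℤ, ∫⁻ y in Set.Ioc (x+(2:ℝ)^k) (x+(2:ℝ)^(k+1)), g y := by
  rw [← iUnion_plus x, lintegral_iUnion (fun k => measurableSet_Ioc) (disj_plus x) g]

lemma lint_partition_minus (x : ℝ) (g : ℝ → ℝ≥0∞) :
    ∫⁻ y in Set.Iio x, g y
      = ∑' k:ℤ, ∫⁻ y in Set.Ico (x-(2:ℝ)^(k+1)) (x-(2:ℝ)^k), g y := by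
  rw [← iUnion_minus x, lintegral_iUnion (fun k => measurableSet_Ico) (disj_minus x) g]

lemma lint_partition_plus_le (x : ℝ) (k : ℤ) (g : ℝ → ℝ≥0∞) :
    ∫⁻ y in Set.Ioc x (x+(2:ℝ)^(k+1)), g y
      = ∑' j:ℤ, if j ≤ k then ∫⁻ y in Set.Ioc (x+(2:ℝ)^j) (x+(2:ℝ)^(j+1)), g y else 0 := by
  have h1 := lintegral_iUnion (μ := volume)
    (s := fun j : {j:ℤ // j ≤ k} => Set.Ioc (x+(2:ℝ)^(j:ℤ)) (x+(2:ℝ)^((j:ℤ)+1)))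
    (fun j => measurableSet_Ioc)
    (fun i j hij => disj_plus x (Subtype.coe_ne_coe.2 hij)) g
  rw [iUnion_plus_le x k] at h1
  rw [h1]
  have h2 := tsum_subtype {j:ℤ | j ≤ k}
    (fun j => ∫⁻ y in Set.Ioc (x+(2:ℝ)^j) (x+(2:ℝ)^(j+1)), g y)
  refine h2.trans ?_
  exact tsum_congr fun j => by
    by_cases hj : j ≤ k <;> simp [Set.indicator_apply, Set.mem_setOf_eq, hj]

lemma lint_partition_minus_le (x : ℝ) (k : ℤ) (g : ℝ → ℝ≥0∞) :
    ∫⁻ y in Set.Ico (x-(2:ℝ)^(k+1)) x, g y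
      = ∑' j:ℤ, if j ≤ k then ∫⁻ y in Set.Ico (x-(2:ℝ)^(j+1)) (x-(2:ℝ)^j), g y else 0 := by
  have h1 := lintegral_iUnion (μ := volume)
    (s := fun j : {j:ℤ // j ≤ k} => Set.Ico (x-(2:ℝ)^((j:ℤ)+1)) (x-(2:ℝ)^(j:ℤ)))
    (fun j => measurableSet_Ico)
    (fun i j hij => disj_minus x (Subtype.coe_ne_coe.2 hij)) g
  rw [iUnion_minus_le x k] at h1
  rw [h1]
  have h2 := tsum_subtype {j:ℤ | j ≤ k}
    (fun j => ∫⁻ y in Set.Ico (x-(2:ℝ)^(j+1)) (x-(2:ℝ)^j), g y)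
  refine h2.trans ?_
  exact tsum_congr fun j => by
    by_cases hj : j ≤ k <;> simp [Set.indicator_apply, Set.mem_setOf_eq, hj]

lemma diff_quot {f : ℝ → ℂ} (hf : ContDiff ℝ 1 f) {a c x y : ℝ}
    (hax : a ≤ x) (hay : a ≤ y) (hxc : x ≤ c) (hyc : y ≤ c) :
    (‖f x - f y‖₊ : ℝ≥0∞) ≤ ∫⁻ s in Set.Ioc a c, (‖deriv f s‖₊ : ℝ≥0∞) := by
  have hcont : Continuous (deriv f) := hf.continuous_deriv le_rfl
  have main : ∀ u v : ℝ, a ≤ u → u ≤ v → v ≤ c →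
      (‖f v - f u‖₊ : ℝ≥0∞) ≤ ∫⁻ s in Set.Ioc a c, (‖deriv f s‖₊ : ℝ≥0∞) := by
    intro u v hau huv hvc
    have hftc : f v - f u = ∫ s in u..v, deriv f s :=
      (intervalIntegral.integral_deriv_eq_sub
        (fun t _ => (hf.differentiable one_ne_zero).differentiableAt)
        (hcont.intervalIntegrable u v)).symm
    rw [hftc, intervalIntegral.integral_of_le huv]
    calc (‖∫ s in Set.Ioc u v, deriv f s‖₊ : ℝ≥0∞)
        ≤ ∫⁻ s in Set.Ioc u v, (‖deriv f s‖₊ : ℝ≥0∞) :=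
          enorm_integral_le_lintegral_enorm _
      _ ≤ ∫⁻ s in Set.Ioc a c, (‖deriv f s‖₊ : ℝ≥0∞) :=
          lintegral_mono_set (Set.Ioc_subset_Ioc hau hvc)
  rcases le_total x y with h|h
  · rw [← nnnorm_neg]
    simp only [neg_sub]
    exact main x y hax h hyc
  · exact main y x hay h hxc

lemma lint_sq_le {s : Set ℝ} {G : ℝ → ℝ≥0∞} (hG : AEMeasurable G (volume.restrict s)) :
    (∫⁻ y in s, G y)^2 ≤ volume s * ∫⁻ y in s, (G y)^2 := by
  have hconj : Real.HolderConjugate 2 2 := by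
    constructor <;> norm_num
  have h := ENNReal.lintegral_mul_le_Lp_mul_Lq (volume.restrict s) hconj
    aemeasurable_const (f := fun _ => (1:ℝ≥0∞)) hG
  simp only [Pi.mul_apply, one_mul, ENNReal.one_rpow] at h
  rw [lintegral_const, Measure.restrict_apply MeasurableSet.univ, Set.univ_inter, one_mul] at h
  have hsq : ∀ X:ℝ≥0∞, (X^((1:ℝ)/2))^2 = X := by
    intro X
    rw [← ENNReal.rpow_natCast (X^((1:ℝ)/2)) 2, ← ENNReal.rpow_mul]
    norm_num
  calc (∫⁻ y in s, G y)^2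
      ≤ ((volume s)^((1:ℝ)/2) * (∫⁻ y in s, (G y)^(2:ℝ))^((1:ℝ)/2))^2 := by
        apply pow_le_pow_left' h
      _ = volume s * ∫⁻ y in s, (G y)^2 := by
        rw [mul_pow, hsq, hsq]
        congr 1
        exact lintegral_congr fun y => by rw [← ENNReal.rpow_natCast (G y) 2]; norm_num

lemma intervalIntegrable_of_loc (hw : LocallyIntegrable w volume) (a b : ℝ) :
    IntervalIntegrable w volume a b := by
  rw [intervalIntegrable_iff]
  exact (hw.integrableOn_isCompact isCompact_Icc).mono_set Set.Ioc_subset_Icc_self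

lemma avg_measurable (hw : LocallyIntegrable w volume) (x : ℝ) :
    Measurable (fun y => intervalAvg w x y) := by
  have hprim : Continuous (fun y => ∫ s in x..y, w s) :=
    intervalIntegral.continuous_primitive (intervalIntegrable_of_loc hw) x
  have : (fun y => intervalAvg w x y) = fun y => (1/(x-y)) * (-(∫ s in x..y, w s)) := by
    funext y
    unfold intervalAvg
    rw [intervalIntegral.integral_symm]
  rw [this]
  have hm1 : Measurable (fun y : ℝ => 1/(x-y)) := by
    have : Measurable (fun y : ℝ => x - y) := measurable_const.sub measurable_id
    exact measurable_const.div this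
  exact hm1.mul hprim.measurable.neg

lemma osc_aemeasurable (hw : LocallyIntegrable w volume) (x : ℝ) :
    AEMeasurable (fun y => (‖w y - intervalAvg w x y‖₊ : ℝ≥0∞)) volume :=
  (hw.aestronglyMeasurable.aemeasurable.sub (avg_measurable hw x).aemeasurable).enorm

lemma D2 : D 2 = 4 := by
  have h := D_nat 2
  norm_num at h
  exact h

lemma core_plus (hw : LocallyIntegrable w volume) (hB : HasFiniteBMO w)
    {f : ℝ → ℂ} (hf : ContDiff ℝ 1 f) (x : ℝ) :
    ∫⁻ y in Set.Ioi x, (‖w y - intervalAvg w x y‖₊ : ℝ≥0∞) *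
        ((‖f x - f y‖₊ : ℝ≥0∞)^2 * ((‖x - y‖₊ : ℝ≥0∞)^2)⁻¹)
      ≤ ENNReal.ofReal (128 * bmoSeminorm w) *
          ∫⁻ s in Set.Ioi x, (‖deriv f s‖₊ : ℝ≥0∞)^2 := by
  set g := deriv f with hg
  have hgm : Measurable (fun s => (‖g s‖₊ : ℝ≥0∞)) :=
    (hf.continuous_deriv le_rfl).measurable.enorm
  set osc := fun y => (‖w y - intervalAvg w x y‖₊ : ℝ≥0∞) with hosc
  set l : ℤ → ℝ≥0∞ := fun j => ∫⁻ s in Set.Ioc (x+(2:ℝ)^j) (x+(2:ℝ)^(j+1)), (‖g s‖₊ : ℝ≥0∞)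
    with hl
  set hh : ℤ → ℝ≥0∞ := fun j => ∫⁻ s in Set.Ioc (x+(2:ℝ)^j) (x+(2:ℝ)^(j+1)), (‖g s‖₊ : ℝ≥0∞)^2
    with hhh
  have hβ : ∀ k:ℤ, ENNReal.ofReal ((2:ℝ)^(k+2) * bmoSeminorm w)
      = (D k * D 2) * ENNReal.ofReal (bmoSeminorm w) := by
    intro k
    rw [← D_add, ENNReal.ofReal_mul (by positivity)]
    rfl
  have hvol : ∀ j:ℤ, volume (Set.Ioc (x+(2:ℝ)^j) (x+(2:ℝ)^(j+1))) = D j := by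
    intro j
    rw [Real.volume_Ioc]
    unfold D
    congr 1
    have : (2:ℝ)^(j+1) = 2^j * 2 := by rw [zpow_add₀ two_ne_zero]; norm_num
    linarith [this]
  have hlj : ∀ j, (l j)^2 ≤ D j * hh j := by
    intro j
    rw [← hvol j]
    exact lint_sq_le hgm.aemeasurable.restrict
  -- per annulus bound
  have hann : ∀ k:ℤ, (∫⁻ y in Set.Ioc (x+(2:ℝ)^k) (x+(2:ℝ)^(k+1)),
      osc y * ((‖f x - f y‖₊ : ℝ≥0∞)^2 * ((‖x - y‖₊ : ℝ≥0∞)^2)⁻¹))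
      ≤ ((D k)⁻¹ * (∑' j:ℤ, if j ≤ k then l j else 0)^2) *
          (4 * ENNReal.ofReal (bmoSeminorm w)) := by
    intro k
    have h2k : (0:ℝ) < 2^k := by positivity
    set Λ : ℝ≥0∞ := ∫⁻ s in Set.Ioc x (x+(2:ℝ)^(k+1)), (‖g s‖₊ : ℝ≥0∞) with hΛ
    have hC : ∀ y ∈ Set.Ioc (x+(2:ℝ)^k) (x+(2:ℝ)^(k+1)),
        (‖f x - f y‖₊ : ℝ≥0∞)^2 * ((‖x - y‖₊ : ℝ≥0∞)^2)⁻¹ ≤ Λ^2 * ((D k)^2)⁻¹ := by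
      intro y hy
      have hxy : x < y := lt_trans (by linarith) hy.1
      have hdq : (‖f x - f y‖₊ : ℝ≥0∞) ≤ Λ :=
        diff_quot hf (le_refl x) hxy.le (by linarith [h2k, (zpow_pos (by norm_num : (0:ℝ) < 2) (k+1) : (0:ℝ) < 2^(k+1))]) hy.2
      have hD : D k ≤ (‖x - y‖₊ : ℝ≥0∞) := by
        rw [← enorm_eq_nnnorm, Real.enorm_eq_ofReal_abs]
        apply ENNReal.ofReal_le_ofReal
        rw [abs_sub_comm, abs_of_pos (by linarith)]
        linarith [hy.1]
      have h1 : ((‖x - y‖₊ : ℝ≥0∞)^2)⁻¹ ≤ ((D k)^2)⁻¹ :=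
        ENNReal.inv_le_inv' (pow_le_pow_left' hD 2)
      exact mul_le_mul' (pow_le_pow_left' hdq 2) h1
    calc ∫⁻ y in Set.Ioc (x+(2:ℝ)^k) (x+(2:ℝ)^(k+1)),
          osc y * ((‖f x - f y‖₊ : ℝ≥0∞)^2 * ((‖x - y‖₊ : ℝ≥0∞)^2)⁻¹)
        ≤ ∫⁻ y in Set.Ioc (x+(2:ℝ)^k) (x+(2:ℝ)^(k+1)), (Λ^2 * ((D k)^2)⁻¹) * osc y := by
          refine lintegral_mono_ae ?_
          rw [ae_restrict_iff' measurableSet_Ioc]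
          refine Filter.Eventually.of_forall fun y hy => ?_
          rw [mul_comm]
          exact mul_le_mul' (hC y hy) le_rfl
      _ = (Λ^2 * ((D k)^2)⁻¹) * ∫⁻ y in Set.Ioc (x+(2:ℝ)^k) (x+(2:ℝ)^(k+1)), osc y :=
          lintegral_const_mul'' _ (osc_aemeasurable hw x).restrict
      _ ≤ (Λ^2 * ((D k)^2)⁻¹) * ((D k * D 2) * ENNReal.ofReal (bmoSeminorm w)) := by
          rw [← hβ k]
          exact mul_le_mul' le_rfl (annulus_plus hw hB x k)
      _ = ((D k)⁻¹ * Λ^2) * (4 * ENNReal.ofReal (bmoSeminorm w)) := by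
          rw [D2, sq (D k), ENNReal.mul_inv (Or.inl (D_ne_zero k)) (Or.inl (D_ne_top k))]
          calc Λ^2 * ((D k)⁻¹ * (D k)⁻¹) * (D k * 4 * ENNReal.ofReal (bmoSeminorm w))
              = ((D k)⁻¹ * Λ^2) * (4 * ENNReal.ofReal (bmoSeminorm w)) *
                  ((D k)⁻¹ * D k) := by ring
            _ = ((D k)⁻¹ * Λ^2) * (4 * ENNReal.ofReal (bmoSeminorm w)) := by
                rw [ENNReal.inv_mul_cancel (D_ne_zero k) (D_ne_top k), mul_one]
      _ = ((D k)⁻¹ * (∑' j:ℤ, if j ≤ k then l j else 0)^2) *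
            (4 * ENNReal.ofReal (bmoSeminorm w)) := by
          rw [hΛ, lint_partition_plus_le x k]
  calc ∫⁻ y in Set.Ioi x, osc y * ((‖f x - f y‖₊ : ℝ≥0∞)^2 * ((‖x - y‖₊ : ℝ≥0∞)^2)⁻¹)
      = ∑' k:ℤ, ∫⁻ y in Set.Ioc (x+(2:ℝ)^k) (x+(2:ℝ)^(k+1)),
          osc y * ((‖f x - f y‖₊ : ℝ≥0∞)^2 * ((‖x - y‖₊ : ℝ≥0∞)^2)⁻¹) :=
        lint_partition_plus x _
    _ ≤ ∑' k:ℤ, ((D k)⁻¹ * (∑' j:ℤ, if j ≤ k then l j else 0)^2) *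
          (4 * ENNReal.ofReal (bmoSeminorm w)) := ENNReal.tsum_le_tsum hann
    _ = (∑' k:ℤ, (D k)⁻¹ * (∑' j:ℤ, if j ≤ k then l j else 0)^2) *
          (4 * ENNReal.ofReal (bmoSeminorm w)) := ENNReal.tsum_mul_right
    _ ≤ (32 * ∑' j:ℤ, hh j) * (4 * ENNReal.ofReal (bmoSeminorm w)) :=
        mul_le_mul' (dyadic_sum l hh hlj) le_rfl
    _ = ENNReal.ofReal (128 * bmoSeminorm w) * ∑' j:ℤ, hh j := by
        rw [ENNReal.ofReal_mul (by norm_num)]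
        have : ENNReal.ofReal (128:ℝ) = 128 := by norm_num
        rw [this]; ring
    _ = ENNReal.ofReal (128 * bmoSeminorm w) *
          ∫⁻ s in Set.Ioi x, (‖g s‖₊ : ℝ≥0∞)^2 := by
        rw [← lint_partition_plus x (fun s => (‖g s‖₊ : ℝ≥0∞)^2)]

lemma core_minus (hw : LocallyIntegrable w volume) (hB : HasFiniteBMO w)
    {f : ℝ → ℂ} (hf : ContDiff ℝ 1 f) (x : ℝ) :
    ∫⁻ y in Set.Iio x, (‖w y - intervalAvg w x y‖₊ : ℝ≥0∞) *
        ((‖f x - f y‖₊ : ℝ≥0∞)^2 * ((‖x - y‖₊ : ℝ≥0∞)^2)⁻¹)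
      ≤ ENNReal.ofReal (128 * bmoSeminorm w) *
          ∫⁻ s in Set.Iio x, (‖deriv f s‖₊ : ℝ≥0∞)^2 := by
  set g := deriv f with hg
  have hgm : Measurable (fun s => (‖g s‖₊ : ℝ≥0∞)) :=
    (hf.continuous_deriv le_rfl).measurable.enorm
  set osc := fun y => (‖w y - intervalAvg w x y‖₊ : ℝ≥0∞) with hosc
  set l : ℤ → ℝ≥0∞ := fun j => ∫⁻ s in Set.Ico (x-(2:ℝ)^(j+1)) (x-(2:ℝ)^j), (‖g s‖₊ : ℝ≥0∞)
    with hl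
  set hh : ℤ → ℝ≥0∞ := fun j => ∫⁻ s in Set.Ico (x-(2:ℝ)^(j+1)) (x-(2:ℝ)^j), (‖g s‖₊ : ℝ≥0∞)^2
    with hhh
  have hβ : ∀ k:ℤ, ENNReal.ofReal ((2:ℝ)^(k+2) * bmoSeminorm w)
      = (D k * D 2) * ENNReal.ofReal (bmoSeminorm w) := by
    intro k
    rw [← D_add, ENNReal.ofReal_mul (by positivity)]
    rfl
  have hvol : ∀ j:ℤ, volume (Set.Ico (x-(2:ℝ)^(j+1)) (x-(2:ℝ)^j)) = D j := by
    intro j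
    rw [Real.volume_Ico]
    unfold D
    congr 1
    have : (2:ℝ)^(j+1) = 2^j * 2 := by rw [zpow_add₀ two_ne_zero]; norm_num
    linarith [this]
  have hlj : ∀ j, (l j)^2 ≤ D j * hh j := by
    intro j
    rw [← hvol j]
    exact lint_sq_le hgm.aemeasurable.restrict
  have hann : ∀ k:ℤ, (∫⁻ y in Set.Ico (x-(2:ℝ)^(k+1)) (x-(2:ℝ)^k),
      osc y * ((‖f x - f y‖₊ : ℝ≥0∞)^2 * ((‖x - y‖₊ : ℝ≥0∞)^2)⁻¹))
      ≤ ((D k)⁻¹ * (∑' j:ℤ, if j ≤ k then l j else 0)^2) *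
          (4 * ENNReal.ofReal (bmoSeminorm w)) := by
    intro k
    have h2k : (0:ℝ) < 2^k := by positivity
    have h2k1 : (0:ℝ) < 2^(k+1) := by positivity
    set Λ : ℝ≥0∞ := ∫⁻ s in Set.Ico (x-(2:ℝ)^(k+1)) x, (‖g s‖₊ : ℝ≥0∞) with hΛ
    have hIcIo : ∫⁻ s in Set.Ioc (x-(2:ℝ)^(k+1)) x, (‖g s‖₊ : ℝ≥0∞) = Λ := by
      rw [hΛ, Measure.restrict_congr_set (Ioo_ae_eq_Ioc.symm.trans Ioo_ae_eq_Ico)]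
    have hC : ∀ y ∈ Set.Ico (x-(2:ℝ)^(k+1)) (x-(2:ℝ)^k),
        (‖f x - f y‖₊ : ℝ≥0∞)^2 * ((‖x - y‖₊ : ℝ≥0∞)^2)⁻¹ ≤ Λ^2 * ((D k)^2)⁻¹ := by
      intro y hy
      have hxy : y < x := lt_trans hy.2 (by linarith)
      have hdq : (‖f x - f y‖₊ : ℝ≥0∞) ≤ Λ := by
        rw [← hIcIo]
        exact diff_quot hf (by linarith) hy.1 (le_refl x) hxy.le
      have hD : D k ≤ (‖x - y‖₊ : ℝ≥0∞) := by
        rw [← enorm_eq_nnnorm, Real.enorm_eq_ofReal_abs]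
        apply ENNReal.ofReal_le_ofReal
        rw [abs_of_pos (by linarith)]
        linarith [hy.2]
      have h1 : ((‖x - y‖₊ : ℝ≥0∞)^2)⁻¹ ≤ ((D k)^2)⁻¹ :=
        ENNReal.inv_le_inv' (pow_le_pow_left' hD 2)
      exact mul_le_mul' (pow_le_pow_left' hdq 2) h1
    calc ∫⁻ y in Set.Ico (x-(2:ℝ)^(k+1)) (x-(2:ℝ)^k),
          osc y * ((‖f x - f y‖₊ : ℝ≥0∞)^2 * ((‖x - y‖₊ : ℝ≥0∞)^2)⁻¹)
        ≤ ∫⁻ y in Set.Ico (x-(2:ℝ)^(k+1)) (x-(2:ℝ)^k), (Λ^2 * ((D k)^2)⁻¹) * osc y := by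
          refine lintegral_mono_ae ?_
          rw [ae_restrict_iff' measurableSet_Ico]
          refine Filter.Eventually.of_forall fun y hy => ?_
          rw [mul_comm]
          exact mul_le_mul' (hC y hy) le_rfl
      _ = (Λ^2 * ((D k)^2)⁻¹) * ∫⁻ y in Set.Ico (x-(2:ℝ)^(k+1)) (x-(2:ℝ)^k), osc y :=
          lintegral_const_mul'' _ (osc_aemeasurable hw x).restrict
      _ ≤ (Λ^2 * ((D k)^2)⁻¹) * ((D k * D 2) * ENNReal.ofReal (bmoSeminorm w)) := by
          rw [← hβ k]
          exact mul_le_mul' le_rfl (annulus_minus hw hB x k)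
      _ = ((D k)⁻¹ * Λ^2) * (4 * ENNReal.ofReal (bmoSeminorm w)) := by
          rw [D2, sq (D k), ENNReal.mul_inv (Or.inl (D_ne_zero k)) (Or.inl (D_ne_top k))]
          calc Λ^2 * ((D k)⁻¹ * (D k)⁻¹) * (D k * 4 * ENNReal.ofReal (bmoSeminorm w))
              = ((D k)⁻¹ * Λ^2) * (4 * ENNReal.ofReal (bmoSeminorm w)) *
                  ((D k)⁻¹ * D k) := by ring
            _ = ((D k)⁻¹ * Λ^2) * (4 * ENNReal.ofReal (bmoSeminorm w)) := by
                rw [ENNReal.inv_mul_cancel (D_ne_zero k) (D_ne_top k), mul_one]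
      _ = ((D k)⁻¹ * (∑' j:ℤ, if j ≤ k then l j else 0)^2) *
            (4 * ENNReal.ofReal (bmoSeminorm w)) := by
          rw [hΛ, lint_partition_minus_le x k]
  calc ∫⁻ y in Set.Iio x, osc y * ((‖f x - f y‖₊ : ℝ≥0∞)^2 * ((‖x - y‖₊ : ℝ≥0∞)^2)⁻¹)
      = ∑' k:ℤ, ∫⁻ y in Set.Ico (x-(2:ℝ)^(k+1)) (x-(2:ℝ)^k),
          osc y * ((‖f x - f y‖₊ : ℝ≥0∞)^2 * ((‖x - y‖₊ : ℝ≥0∞)^2)⁻¹) :=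
        lint_partition_minus x _
    _ ≤ ∑' k:ℤ, ((D k)⁻¹ * (∑' j:ℤ, if j ≤ k then l j else 0)^2) *
          (4 * ENNReal.ofReal (bmoSeminorm w)) := ENNReal.tsum_le_tsum hann
    _ = (∑' k:ℤ, (D k)⁻¹ * (∑' j:ℤ, if j ≤ k then l j else 0)^2) *
          (4 * ENNReal.ofReal (bmoSeminorm w)) := ENNReal.tsum_mul_right
    _ ≤ (32 * ∑' j:ℤ, hh j) * (4 * ENNReal.ofReal (bmoSeminorm w)) :=
        mul_le_mul' (dyadic_sum l hh hlj) le_rfl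
    _ = ENNReal.ofReal (128 * bmoSeminorm w) * ∑' j:ℤ, hh j := by
        rw [ENNReal.ofReal_mul (by norm_num)]
        have : ENNReal.ofReal (128:ℝ) = 128 := by norm_num
        rw [this]; ring
    _ = ENNReal.ofReal (128 * bmoSeminorm w) *
          ∫⁻ s in Set.Iio x, (‖g s‖₊ : ℝ≥0∞)^2 := by
        rw [← lint_partition_minus x (fun s => (‖g s‖₊ : ℝ≥0∞)^2)]

/-- Inequality (eq. b25) of the paper: for `b ∈ BMO(ℝ)` and bounded `C¹` functions
`f₁, f₂` with `f₁′, f₂′ ∈ L²`, pointwise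
`|∫ (b(y) − avg_x^y b)(f₁(x)−f₁(y))(f₂(x)−f₂(y))/(x−y)² dy| ≤ C ‖b‖_{BMO} ‖f₁′‖_{L²} ‖f₂′‖_{L²}`. -/
lemma split_lint (x : ℝ) (W : ℝ → ℝ≥0∞) :
    ∫⁻ y, W y = (∫⁻ y in Set.Iio x, W y) + ∫⁻ y in Set.Ioi x, W y := by
  have h1 : ({x}ᶜ : Set ℝ) =ᵐ[volume] (Set.univ : Set ℝ) := by
    rw [MeasureTheory.ae_eq_univ, compl_compl]
    exact measure_singleton x
  calc ∫⁻ y, W y = ∫⁻ y in Set.univ, W y := (setLIntegral_univ W).symm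
    _ = ∫⁻ y in ({x}ᶜ : Set ℝ), W y := by rw [Measure.restrict_congr_set h1]
    _ = ∫⁻ y in Set.Iio x ∪ Set.Ioi x, W y := by rw [Set.Iio_union_Ioi]
    _ = (∫⁻ y in Set.Iio x, W y) + ∫⁻ y in Set.Ioi x, W y :=
        lintegral_union measurableSet_Ioi ((Set.Iic_disjoint_Ioi le_rfl).mono_left Set.Iio_subset_Iic_self)

lemma core_both (hw : LocallyIntegrable w volume) (hB : HasFiniteBMO w)
    {f : ℝ → ℂ} (hf : ContDiff ℝ 1 f) (x : ℝ) :
    ∫⁻ y, (‖w y - intervalAvg w x y‖₊ : ℝ≥0∞) *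
        ((‖f x - f y‖₊ : ℝ≥0∞)^2 * ((‖x - y‖₊ : ℝ≥0∞)^2)⁻¹)
      ≤ ENNReal.ofReal (128 * bmoSeminorm w) * ∫⁻ s, (‖deriv f s‖₊ : ℝ≥0∞)^2 := by
  rw [split_lint x, split_lint x (fun s => (‖deriv f s‖₊ : ℝ≥0∞)^2), mul_add]
  exact add_le_add (core_minus hw hB hf x) (core_plus hw hB hf x)

theorem bmo_quartic_inequality_b25 :
    ∃ C > (0 : ℝ), ∀ (b : ℝ → ℝ) (f₁ f₂ : ℝ → ℂ),
      LocallyIntegrable b volume → HasFiniteBMO b →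
      ContDiff ℝ 1 f₁ → (∃ M, ∀ x, ‖f₁ x‖ ≤ M) → MemLp (deriv f₁) 2 volume →
      ContDiff ℝ 1 f₂ → (∃ M, ∀ x, ‖f₂ x‖ ≤ M) → MemLp (deriv f₂) 2 volume →
      ∀ x : ℝ,
        ‖∫ y : ℝ, ((b y - intervalAvg b x y : ℝ) : ℂ) *
            ((f₁ x - f₁ y) * (f₂ x - f₂ y) / ((x - y : ℝ) : ℂ) ^ 2)‖
          ≤ C * bmoSeminorm b * (eLpNorm (deriv f₁) 2 volume).toReal *
              (eLpNorm (deriv f₂) 2 volume).toReal := by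
  refine ⟨128, by norm_num, ?_⟩
  intro b f₁ f₂ hw hB hf₁ _ hL₁ hf₂ _ hL₂ x
  set F := fun y => (((b y - intervalAvg b x y : ℝ) : ℂ)) *
    ((f₁ x - f₁ y) * (f₂ x - f₂ y) / ((x - y : ℝ) : ℂ)^2) with hF
  set osc := fun y => (‖b y - intervalAvg b x y‖₊ : ℝ≥0∞) with hosc
  set q₁ := fun y => (‖f₁ x - f₁ y‖₊ : ℝ≥0∞)^2 * ((‖x - y‖₊ : ℝ≥0∞)^2)⁻¹ with hq₁
  set q₂ := fun y => (‖f₂ x - f₂ y‖₊ : ℝ≥0∞)^2 * ((‖x - y‖₊ : ℝ≥0∞)^2)⁻¹ with hq₂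
  set u := fun y => osc y * q₁ y with hu
  set v := fun y => osc y * q₂ y with hv
  set K := ENNReal.ofReal (128 * bmoSeminorm b) with hK
  set c₁ := eLpNorm (deriv f₁) 2 volume with hc₁
  set c₂ := eLpNorm (deriv f₂) 2 volume with hc₂
  have rpow_half_sq : ∀ X:ℝ≥0∞, (X^((1:ℝ)/2))^(2:ℝ) = X := by
    intro X
    rw [← ENNReal.rpow_mul]
    norm_num
  have sq_rpow_half : ∀ X:ℝ≥0∞, (X^(2:ℕ))^((1:ℝ)/2) = X := by
    intro X
    rw [← ENNReal.rpow_natCast X 2, ← ENNReal.rpow_mul]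
    norm_num
  -- pointwise bound
  have hpt : ∀ y, ENNReal.ofReal ‖F y‖ ≤ (u y)^((1:ℝ)/2) * (v y)^((1:ℝ)/2) := by
    intro y
    by_cases hxy : y = x
    · subst hxy
      have : F y = 0 := by
        simp [hF]
      rw [this]
      simp
    · have hT : (u y)^((1:ℝ)/2) * (v y)^((1:ℝ)/2)
          = osc y * ((‖f₁ x - f₁ y‖₊ : ℝ≥0∞) * (‖f₂ x - f₂ y‖₊ : ℝ≥0∞) *
              ((‖x - y‖₊ : ℝ≥0∞)^2)⁻¹) := by
        rw [← ENNReal.mul_rpow_of_nonneg _ _ (by norm_num : (0:ℝ) ≤ 1/2)]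
        have huv : u y * v y = (osc y * ((‖f₁ x - f₁ y‖₊ : ℝ≥0∞) * (‖f₂ x - f₂ y‖₊ : ℝ≥0∞) *
            ((‖x - y‖₊ : ℝ≥0∞)^2)⁻¹))^(2:ℕ) := by
          simp only [hu, hv, hq₁, hq₂]
          ring
        rw [huv, sq_rpow_half]
      rw [hT]
      have hne : (‖x - y‖₊ : ℝ≥0) ≠ 0 := by
        simp only [ne_eq, nnnorm_eq_zero, sub_eq_zero]
        exact fun h => hxy h.symm
      have hFnn : ‖F y‖₊ = ‖b y - intervalAvg b x y‖₊ *
          (‖f₁ x - f₁ y‖₊ * ‖f₂ x - f₂ y‖₊ / ‖x - y‖₊^2) := by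
        simp only [hF, nnnorm_mul, nnnorm_div, nnnorm_pow, Complex.nnnorm_real]
      refine le_of_eq ?_
      rw [ofReal_norm, enorm_eq_nnnorm, hFnn]
      rw [ENNReal.coe_mul, ENNReal.coe_div (pow_ne_zero 2 hne), ENNReal.coe_mul,
        ENNReal.coe_pow]
      rw [div_eq_mul_inv]
  -- measurability
  have hq₁m : Measurable q₁ := by
    have h1 : Measurable fun y => (‖f₁ x - f₁ y‖₊ : ℝ≥0∞) :=
      (continuous_const.sub hf₁.continuous).measurable.enorm
    have h2 : Measurable fun y => (‖x - y‖₊ : ℝ≥0∞) :=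
      (continuous_const.sub continuous_id).measurable.enorm
    exact (h1.pow_const 2).mul ((h2.pow_const 2).inv)
  have hq₂m : Measurable q₂ := by
    have h1 : Measurable fun y => (‖f₂ x - f₂ y‖₊ : ℝ≥0∞) :=
      (continuous_const.sub hf₂.continuous).measurable.enorm
    have h2 : Measurable fun y => (‖x - y‖₊ : ℝ≥0∞) :=
      (continuous_const.sub continuous_id).measurable.enorm
    exact (h1.pow_const 2).mul ((h2.pow_const 2).inv)
  have hum : AEMeasurable u volume := (osc_aemeasurable hw x).mul hq₁m.aemeasurable
  have hvm : AEMeasurable v volume := (osc_aemeasurable hw x).mul hq₂m.aemeasurable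
  have hconj : Real.HolderConjugate 2 2 := by constructor <;> norm_num
  -- Hölder
  have hhold : ∫⁻ y, (u y)^((1:ℝ)/2) * (v y)^((1:ℝ)/2)
      ≤ (∫⁻ y, u y)^((1:ℝ)/2) * (∫⁻ y, v y)^((1:ℝ)/2) := by
    have h := ENNReal.lintegral_mul_le_Lp_mul_Lq volume hconj
      (hum.pow aemeasurable_const : AEMeasurable (fun y => (u y)^((1:ℝ)/2)) volume)
      (hvm.pow aemeasurable_const : AEMeasurable (fun y => (v y)^((1:ℝ)/2)) volume)
    simp only [Pi.mul_apply] at h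
    refine le_trans h (le_of_eq ?_)
    congr 1
    · congr 1
      exact lintegral_congr fun y => rpow_half_sq (u y)
    · congr 1
      exact lintegral_congr fun y => rpow_half_sq (v y)
  have hcore₁ : ∫⁻ y, u y ≤ K * ∫⁻ s, (‖deriv f₁ s‖₊ : ℝ≥0∞)^2 := core_both hw hB hf₁ x
  have hcore₂ : ∫⁻ y, v y ≤ K * ∫⁻ s, (‖deriv f₂ s‖₊ : ℝ≥0∞)^2 := core_both hw hB hf₂ x
  -- eLpNorm identities
  have hels : ∀ g : ℝ → ℂ, (∫⁻ s, (‖g s‖₊ : ℝ≥0∞)^2)^((1:ℝ)/2) = eLpNorm g 2 volume := by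
    intro g
    rw [eLpNorm_eq_lintegral_rpow_enorm_toReal (by norm_num) (by norm_num)]
    have : (2:ℝ≥0∞).toReal = 2 := by norm_num
    rw [this]
    congr 1
    · exact lintegral_congr fun s => by rw [← ENNReal.rpow_natCast _ 2]; norm_num; rfl
  -- final bound in ℝ≥0∞
  have hmain : ∫⁻ y, ENNReal.ofReal ‖F y‖ ≤ K * (c₁ * c₂) := by
    calc ∫⁻ y, ENNReal.ofReal ‖F y‖
        ≤ ∫⁻ y, (u y)^((1:ℝ)/2) * (v y)^((1:ℝ)/2) := lintegral_mono hpt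
      _ ≤ (∫⁻ y, u y)^((1:ℝ)/2) * (∫⁻ y, v y)^((1:ℝ)/2) := hhold
      _ ≤ (K * ∫⁻ s, (‖deriv f₁ s‖₊ : ℝ≥0∞)^2)^((1:ℝ)/2) *
            (K * ∫⁻ s, (‖deriv f₂ s‖₊ : ℝ≥0∞)^2)^((1:ℝ)/2) := by
          exact mul_le_mul' (ENNReal.rpow_le_rpow hcore₁ (by norm_num))
            (ENNReal.rpow_le_rpow hcore₂ (by norm_num))
      _ = (K^((1:ℝ)/2) * K^((1:ℝ)/2)) *
            ((∫⁻ s, (‖deriv f₁ s‖₊ : ℝ≥0∞)^2)^((1:ℝ)/2) *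
             (∫⁻ s, (‖deriv f₂ s‖₊ : ℝ≥0∞)^2)^((1:ℝ)/2)) := by
          rw [ENNReal.mul_rpow_of_nonneg _ _ (by norm_num : (0:ℝ) ≤ 1/2),
            ENNReal.mul_rpow_of_nonneg _ _ (by norm_num : (0:ℝ) ≤ 1/2)]
          ring
      _ = K * (c₁ * c₂) := by
          rw [hels (deriv f₁), hels (deriv f₂), ← hc₁, ← hc₂]
          congr 1
          rw [← ENNReal.rpow_add_of_nonneg _ _ (by norm_num : (0:ℝ) ≤ 1/2)
            (by norm_num : (0:ℝ) ≤ 1/2)]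
          rw [show (1:ℝ)/2 + 1/2 = 1 by norm_num, ENNReal.rpow_one]
  have hc₁fin : c₁ ≠ ∞ := hL₁.2.ne
  have hc₂fin : c₂ ≠ ∞ := hL₂.2.ne
  have hfin : K * (c₁ * c₂) ≠ ∞ :=
    ENNReal.mul_ne_top ENNReal.ofReal_ne_top (ENNReal.mul_ne_top hc₁fin hc₂fin)
  calc ‖∫ y, F y‖ ≤ (∫⁻ y, ENNReal.ofReal ‖F y‖).toReal :=
        norm_integral_le_lintegral_norm F
    _ ≤ (K * (c₁ * c₂)).toReal := ENNReal.toReal_mono hfin hmain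
    _ = 128 * bmoSeminorm b * c₁.toReal * c₂.toReal := by
        rw [ENNReal.toReal_mul, ENNReal.toReal_mul, hK,
          ENNReal.toReal_ofReal (mul_nonneg (by norm_num) (bmo_nonneg hB))]
        ring
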